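/- In the binary potential outcomes model with marginals p₀, p₁, the singleton {1} is a valid (1−α) prediction interval for Y₁−Y₀ under every compatible joint distribution if and only if p₁ − p₀ ≥ 1−α. -/
import Mathlib


noncomputable def val (b : Bool) : ℝ := if b then 1 else 0

/-- A joint pmf on `{0,1}²`; `P a b` is the probability that `Y₀ = a` and `Y₁ = b`,
with marginals `P(Y₀ = 1) = p₀` and `P(Y₁ = 1) = p₁`. -/
def IsJoint (p₀ p₁ : ℝ) (P : Bool → Bool → ℝ) : Prop :=
  (∀ a b, 0 ≤ P a b) ∧ (∑ a : Bool, ∑ b : Bool, P a b) = 1 ∧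
    (P true true + P true false = p₀) ∧ (P true true + P false true = p₁)

/-- `P(Y₁ - Y₀ = δ)` under the joint pmf `P`. -/
noncomputable def probΔ (P : Bool → Bool → ℝ) (δ : ℝ) : ℝ :=
  ∑ a : Bool, ∑ b : Bool, if val b - val a = δ then P a b else 0

lemma probΔ_one (P : Bool → Bool → ℝ) : probΔ P 1 = P false true := by
  simp [probΔ, val, Fintype.sum_bool]
  norm_num

/-- `{1}` is a valid `(1-α)` prediction interval for `Y₁ - Y₀` under every compatible joint
iff `p₁ - p₀ ≥ 1 - α`. -/
theorem stmt_7 (p₀ p₁ α : ℝ) (hα0 : 0 < α) (hα : α < 1 / 2)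
    (h₀ : 0 ≤ p₀) (h₀' : p₀ ≤ 1) (h₁ : 0 ≤ p₁) (h₁' : p₁ ≤ 1) :
    (∀ P : Bool → Bool → ℝ, IsJoint p₀ p₁ P → 1 - α ≤ probΔ P 1) ↔
      (1 - α ≤ p₁ - p₀) := by
  constructor
  · intro h
    rcases le_total p₀ p₁ with hle | hle
    · -- joint: P tt = p₀, P tf = 0, P ft = p₁ - p₀, P ff = 1 - p₁
      have hJ : IsJoint p₀ p₁ (fun a b =>
          if a then (if b then p₀ else 0) else (if b then p₁ - p₀ else 1 - p₁)) := by
        refine ⟨?_, ?_, ?_, ?_⟩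
        · intro a b; cases a <;> cases b <;> simp
          all_goals linarith
        · simp [Fintype.sum_bool]; try ring
        · simp
        · simp
      have := h _ hJ
      rw [probΔ_one] at this
      simp at this
      linarith
    · -- joint: P tt = p₁, P tf = p₀ - p₁, P ft = 0, P ff = 1 - p₀
      have hJ : IsJoint p₀ p₁ (fun a b =>
          if a then (if b then p₁ else p₀ - p₁) else (if b then 0 else 1 - p₀)) := by
        refine ⟨?_, ?_, ?_, ?_⟩
        · intro a b; cases a <;> cases b <;> simp
          all_goals linarith
        · simp [Fintype.sum_bool]; try ring
        · simp
        · simp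
      have := h _ hJ
      rw [probΔ_one] at this
      simp at this
      linarith
  · intro h P hJ
    obtain ⟨hpos, hsum, hm0, hm1⟩ := hJ
    rw [probΔ_one]
    have h1 : P true true ≤ p₀ := by have := hpos true false; linarith
    have := hpos true true
    linarith
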